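/- Let (Ω, P) be a probability space, let N : Ω → ℕ be a measurable random variable such that P(N ≥ k) > 0 for every k ≥ 1, and let (a_k)_{k≥1} be a real sequence with ∑_{k≥1} |a_k|/P(N ≥ k) < ∞. Then the random variable ω ↦ ∑_{k=1}^{N(ω)} a_k / P(N ≥ k) is integrable and its expectation equals ∑_{k=1}^∞ a_k. -/

import Mathlib

open MeasureTheory

/-- Russian-roulette estimator: truncating a series at a random cutoff `N`
and reweighting the `k`-th term by `1 / P(N ≥ k)` gives an integrable random
variable whose expectation is the full sum `∑_{k ≥ 1} a_k`. -/
theorem russian_roulette_unbiased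
    {Ω : Type*} [MeasurableSpace Ω] (P : Measure Ω) [IsProbabilityMeasure P]
    (N : Ω → ℕ) (hN : Measurable N)
    (hpos : ∀ k : ℕ, 1 ≤ k → 0 < (P {ω | k ≤ N ω}).toReal)
    (a : ℕ → ℝ)
    (hsum : Summable fun k : ℕ => |a (k + 1)| / (P {ω | k + 1 ≤ N ω}).toReal) :
    Integrable
      (fun ω => ∑ k ∈ Finset.Icc 1 (N ω), a k / (P {ω' | k ≤ N ω'}).toReal) P ∧
    ∫ ω, (∑ k ∈ Finset.Icc 1 (N ω), a k / (P {ω' | k ≤ N ω'}).toReal) ∂P =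
      ∑' k : ℕ, a (k + 1) := by
  set p : ℕ → ℝ := fun k => (P {ω | k ≤ N ω}).toReal with hp
  have hmeas : ∀ k : ℕ, MeasurableSet {ω | k ≤ N ω} := fun k =>
    hN measurableSet_Ici
  have hp1 : ∀ k, p k ≤ 1 := by
    intro k
    have := ENNReal.toReal_mono (by simp) (prob_le_one (μ := P) (s := {ω | k ≤ N ω}))
    simpa using this
  -- the summands as indicator functions
  set F : ℕ → Ω → ℝ := fun k ω =>
    Set.indicator {ω | k + 1 ≤ N ω} (fun _ => a (k + 1) / p (k + 1)) ω with hF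
  -- the truncated sum rewrites as a sum over range
  have hIcc : ∀ n : ℕ, ∑ k ∈ Finset.Icc 1 n, a k / p k
      = ∑ k ∈ Finset.range n, a (k + 1) / p (k + 1) := by
    intro n
    rw [← Finset.Ico_add_one_right_eq_Icc, Finset.sum_Ico_eq_sum_range]
    refine Finset.sum_congr (by simp) fun k _ => by rw [add_comm 1 k]
  have hkey : ∀ ω, ∑ k ∈ Finset.Icc 1 (N ω), a k / p k = ∑' k, F k ω := by
    intro ω
    rw [hIcc]
    have h0 : ∀ k ∉ Finset.range (N ω), F k ω = 0 := by
      intro k hk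
      have h2 : ¬ (k + 1 ≤ N ω) := by
        simp only [Finset.mem_range, not_lt] at hk; omega
      simp only [hF]
      exact Set.indicator_of_notMem (show ω ∉ {ω' | k + 1 ≤ N ω'} from h2) (fun _ => a (k + 1) / p (k + 1))
    rw [tsum_eq_sum h0]
    refine Finset.sum_congr rfl fun k hk => ?_
    have h2 : k + 1 ≤ N ω := Finset.mem_range.mp hk
    simp only [hF]
    exact (Set.indicator_of_mem (show ω ∈ {ω' | k + 1 ≤ N ω'} from h2) (fun _ => a (k + 1) / p (k + 1))).symm
  -- integrability of each F k and value of its integral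
  have hFint : ∀ k, Integrable (F k) P := fun k =>
    (integrable_const _).indicator (hmeas (k + 1))
  have hInt : ∀ k, ∫ ω, F k ω ∂P = a (k + 1) := by
    intro k
    have hpk := hpos (k + 1) (by omega)
    rw [hF]
    rw [integral_indicator_const _ (hmeas (k + 1))]
    simp only [smul_eq_mul, ← hp]
    exact (mul_div_assoc _ _ _).symm.trans (mul_div_cancel_left₀ _ hpk.ne')
  have hnorm : ∀ k, ∫ ω, ‖F k ω‖ ∂P = |a (k + 1)| := by
    intro k
    have hpk := hpos (k + 1) (by omega)
    simp only [hF, norm_indicator_eq_indicator_norm]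
    rw [integral_indicator_const _ (hmeas (k + 1))]
    simp only [smul_eq_mul, ← hp, Real.norm_eq_abs, abs_div,
      abs_of_pos hpk]
    rw [abs_of_pos (show 0 < p (k + 1) from hpk)]
    exact (mul_div_assoc _ _ _).symm.trans (mul_div_cancel_left₀ _ hpk.ne')
  have habs : Summable fun k : ℕ => |a (k + 1)| := by
    refine hsum.of_nonneg_of_le (fun k => abs_nonneg _) fun k => ?_
    have hpk := hpos (k + 1) (by omega)
    rw [le_div_iff₀ hpk]
    exact mul_le_of_le_one_right (abs_nonneg _) (hp1 _)
  have hFnorm : Summable fun k : ℕ => ∫ ω, ‖F k ω‖ ∂P := by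
    simpa only [hnorm] using habs
  -- measurability of the truncated sum
  have hsm : AEStronglyMeasurable
      (fun ω => ∑ k ∈ Finset.Icc 1 (N ω), a k / p k) P := by
    have : Measurable fun ω => ∑ k ∈ Finset.Icc 1 (N ω), a k / p k :=
      (measurable_from_top (f := fun n : ℕ => ∑ k ∈ Finset.Icc 1 n, a k / p k)).comp hN
    exact this.aestronglyMeasurable
  -- uniform bound
  set C : ℝ := ∑' k : ℕ, |a (k + 1)| / p (k + 1) with hC
  have hbound : ∀ ω, ‖∑ k ∈ Finset.Icc 1 (N ω), a k / p k‖ ≤ C := by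
    intro ω
    calc ‖∑ k ∈ Finset.Icc 1 (N ω), a k / p k‖
        ≤ ∑ k ∈ Finset.Icc 1 (N ω), ‖a k / p k‖ := norm_sum_le _ _
      _ = ∑ k ∈ Finset.range (N ω), |a (k + 1)| / p (k + 1) := by
          rw [← Finset.Ico_add_one_right_eq_Icc, Finset.sum_Ico_eq_sum_range]
          refine Finset.sum_congr (by simp) fun k _ => ?_
          have hpk := hpos (1 + k) (by omega)
          rw [Real.norm_eq_abs, abs_div, abs_of_pos hpk, add_comm 1 k]
      _ ≤ C := by
          refine Summable.sum_le_tsum _ (fun k _ => ?_) hsum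
          exact div_nonneg (abs_nonneg _) (hpos (k + 1) (by omega)).le
  have hint : Integrable
      (fun ω => ∑ k ∈ Finset.Icc 1 (N ω), a k / p k) P :=
    Integrable.mono' (integrable_const C) hsm
      (Filter.Eventually.of_forall hbound)
  refine ⟨hint, ?_⟩
  calc ∫ ω, ∑ k ∈ Finset.Icc 1 (N ω), a k / p k ∂P
      = ∫ ω, ∑' k, F k ω ∂P := by simp_rw [hkey]
    _ = ∑' k, ∫ ω, F k ω ∂P :=
        (integral_tsum_of_summable_integral_norm hFint hFnorm).symm
    _ = ∑' k : ℕ, a (k + 1) := by simp_rw [hInt]
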